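/- arXiv:2403.04356 — 5 statements merged into one kernel-verified Lean document; each statement's English description precedes it below -/
import Mathlib

section
/- For any finite sets B, R ⊆ ℝ with |B| ≤ |R|, there exists an injective map φ : B → R minimizing ∑_{b∈B} |b - φ(b)| over all injective maps B → R, such that φ is strictly monotone increasing (i.e., b' < b implies φ(b') < φ(b)). -/
open Finset

private lemma abs_swap_ineq (a b c d : ℝ) (hab : a ≤ b) (hcd : c ≤ d) :
    |a - c| + |b - d| ≤ |a - d| + |b - c| := by
  have h1 := le_abs_self (a - d); have h2 := neg_abs_le (a - d)
  have h3 := le_abs_self (b - c); have h4 := neg_abs_le (b - c)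
  rcases abs_cases (a - c) with ⟨e1, _⟩ | ⟨e1, _⟩ <;>
    rcases abs_cases (b - d) with ⟨e2, _⟩ | ⟨e2, _⟩ <;> linarith

theorem exists_monotone_optimal_matching (B R : Finset ℝ) (h : B.card ≤ R.card) :
    ∃ φ : ℝ → ℝ, (∀ b ∈ B, φ b ∈ R) ∧ Set.InjOn φ B ∧
      (∀ ψ : ℝ → ℝ, (∀ b ∈ B, ψ b ∈ R) → Set.InjOn ψ B →
        ∑ b ∈ B, |b - φ b| ≤ ∑ b ∈ B, |b - ψ b|) ∧
      (∀ b ∈ B, ∀ b' ∈ B, b' < b → φ b' < φ b) := by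
  classical
  rcases B.eq_empty_or_nonempty with rfl | hBne
  · exact ⟨id, by simp, by simp [Set.InjOn], by simp, by simp⟩
  have hemb : Nonempty (↥B ↪ ↥R) :=
    Function.Embedding.nonempty_of_card_le (by simpa using h)
  have : Nonempty ↥B := hBne.to_subtype
  set cost : (↥B ↪ ↥R) → ℝ := fun f => ∑ b : ↥B, |(b : ℝ) - (f b : ℝ)| with hcost
  set pr : (↥B ↪ ↥R) → ℝ := fun f => ∑ b : ↥B, (b : ℝ) * (f b : ℝ) with hpr
  obtain ⟨f₀, -, hf₀⟩ := Finset.exists_min_image (univ : Finset (↥B ↪ ↥R)) cost univ_nonempty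
  set m := cost f₀ with hm
  set s : Finset (↥B ↪ ↥R) := univ.filter (fun f => cost f = m) with hs
  have hsne : s.Nonempty := ⟨f₀, by rw [hs, mem_filter]; exact ⟨mem_univ _, rfl⟩⟩
  obtain ⟨f, hfs, hfmax⟩ := Finset.exists_max_image s pr hsne
  have hfm : cost f = m := (mem_filter.mp hfs).2
  -- key: f is strictly monotone
  have hmono : ∀ i j : ↥B, (i : ℝ) < (j : ℝ) → (f i : ℝ) < (f j : ℝ) := by
    intro i j hij
    by_contra hle
    push_neg at hle
    have hijne : i ≠ j := fun hh => absurd (congrArg Subtype.val hh) (ne_of_lt hij)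
    have hfne : (f j : ℝ) ≠ (f i : ℝ) := fun hh =>
      hijne.symm (f.injective (Subtype.ext hh))
    have hlt : (f j : ℝ) < (f i : ℝ) := lt_of_le_of_ne hle hfne
    set σ := Equiv.swap i j with hσ
    set g : ↥B ↪ ↥R := σ.toEmbedding.trans f with hg
    -- generic reindexing: sums over g
    have hre : ∀ F : ↥B → ↥R → ℝ,
        ∑ c : ↥B, F c (g c) = ∑ c : ↥B, F (σ c) (f c) := by
      intro F
      refine Fintype.sum_equiv σ _ _ ?_
      intro c
      simp [hg, hσ, Equiv.swap_apply_self]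
    have hmem : j ∈ (univ.erase i) := by simp [hijne.symm]
    have hsplit : ∀ H : ↥B → ℝ,
        ∑ c : ↥B, H c = H i + (H j + ∑ c ∈ (univ.erase i).erase j, H c) := by
      intro H
      rw [Finset.add_sum_erase _ H hmem, Finset.add_sum_erase _ H (mem_univ i)]
    have hfix : ∀ c ∈ (univ.erase i).erase j, σ c = c := by
      intro c hc
      simp only [mem_erase] at hc
      exact Equiv.swap_apply_of_ne_of_ne hc.2.1 hc.1
    have hcg : ∀ F : ↥B → ↥R → ℝ,
        ∑ c : ↥B, F c (g c) =
          F j (f i) + (F i (f j) + ∑ c ∈ (univ.erase i).erase j, F c (f c)) := by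
      intro F
      rw [hre F, hsplit (fun c => F (σ c) (f c))]
      simp only [hσ, Equiv.swap_apply_left, Equiv.swap_apply_right]
      congr 1
      congr 1
      exact Finset.sum_congr rfl fun c hc => by rw [hfix c hc]
    have hcostg : cost g ≤ cost f := by
      rw [hcost]
      simp only
      rw [hcg (fun c r => |(c : ℝ) - (r : ℝ)|),
        hsplit (fun c => |(c : ℝ) - (f c : ℝ)|)]
      have := abs_swap_ineq (i : ℝ) (j : ℝ) (f j : ℝ) (f i : ℝ) hij.le hlt.le
      linarith
    have hprg : pr f < pr g := by
      rw [hpr]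
      simp only
      rw [hcg (fun c r => (c : ℝ) * (r : ℝ)),
        hsplit (fun c => (c : ℝ) * (f c : ℝ))]
      nlinarith [mul_pos (sub_pos.mpr hij) (sub_pos.mpr hlt)]
    have hgs : g ∈ s := by
      simp only [hs, mem_filter, mem_univ, true_and]
      exact le_antisymm (by rw [← hfm]; exact hcostg) (hf₀ g (mem_univ g))
    exact absurd (hfmax g hgs) (not_le.mpr hprg)
  -- define φ
  refine ⟨fun x => if hx : x ∈ B then (f ⟨x, hx⟩ : ℝ) else x, ?_, ?_, ?_, ?_⟩
  · intro b hb; simp only [dif_pos hb]; exact (f ⟨b, hb⟩).2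
  · intro x hx y hy hxy
    simp only [dif_pos (Finset.mem_coe.mp hx), dif_pos (Finset.mem_coe.mp hy)] at hxy
    have := f.injective (Subtype.ext hxy)
    exact congrArg Subtype.val this
  · intro ψ hψ hψinj
    have hginj : Function.Injective (fun b : ↥B => (⟨ψ b, hψ b b.2⟩ : ↥R)) := by
      intro a b hab
      exact Subtype.ext (hψinj a.2 b.2 (congrArg Subtype.val hab))
    set gψ : ↥B ↪ ↥R := ⟨fun b => ⟨ψ b, hψ b b.2⟩, hginj⟩ with hgψ
    have h1 : ∑ b ∈ B, |b - (if hx : b ∈ B then (f ⟨b, hx⟩ : ℝ) else b)| = cost f := by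
      rw [hcost, ← Finset.sum_coe_sort B]
      exact Finset.sum_congr rfl fun b _ => by rw [dif_pos b.2]
    have h2 : ∑ b ∈ B, |b - ψ b| = cost gψ := by
      rw [hcost, ← Finset.sum_coe_sort B]
      exact Finset.sum_congr rfl fun b _ => rfl
    rw [h1, h2, hfm]
    exact hf₀ gψ (mem_univ gψ)
  · intro b hb b' hb' hlt
    simp only [dif_pos hb, dif_pos hb']
    exact hmono ⟨b', hb'⟩ ⟨b, hb⟩ hlt
end

section
/- Let x, y ∈ {0,1}^d be orthogonal vectors (i.e., ∑ᵢ x[i]·y[i] = 0). Define R(x) ⊆ ℤ to contain, for each i ∈ {1,…,d}, the points {4i-3, 4i-2, 4i-1, 4i} if x[i]=0 and the points {4i-2, 4i-1} if x[i]=1; define B(y) ⊆ ℤ to contain, for each i, the points {4i-2, 4i-1} if y[i]=0 and {4i-3, 4i} if y[i]=1. Then there is an injective map φ : B(y) → R(x) with φ(b) = b for all b ∈ B(y); in particular B(y) ⊆ R(x). -/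
/-- The red vector gadget (interior points only). -/
def Rgad (d : ℕ) (x : Fin d → ℕ) : Set ℤ :=
  ⋃ i : Fin d, if x i = 0 then
    ({4 * ((i : ℤ) + 1) - 3, 4 * ((i : ℤ) + 1) - 2, 4 * ((i : ℤ) + 1) - 1,
      4 * ((i : ℤ) + 1)} : Set ℤ)
  else {4 * ((i : ℤ) + 1) - 2, 4 * ((i : ℤ) + 1) - 1}

/-- The blue vector gadget (interior points only). -/
def Bgad (d : ℕ) (y : Fin d → ℕ) : Set ℤ :=
  ⋃ i : Fin d, if y i = 0 then
    ({4 * ((i : ℤ) + 1) - 2, 4 * ((i : ℤ) + 1) - 1} : Set ℤ)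
  else {4 * ((i : ℤ) + 1) - 3, 4 * ((i : ℤ) + 1)}

theorem orthogonal_gadget_subset (d : ℕ) (hd : 0 < d) (x y : Fin d → ℕ)
    (hx : ∀ i, x i ≤ 1) (hy : ∀ i, y i ≤ 1)
    (horth : ∀ i, x i * y i = 0) :
    Bgad d y ⊆ Rgad d x ∧
    ∃ φ : ℤ → ℤ, Set.InjOn φ (Bgad d y) ∧
      (∀ b ∈ Bgad d y, φ b ∈ Rgad d x) ∧ (∀ b ∈ Bgad d y, φ b = b) := by
  have hsub : Bgad d y ⊆ Rgad d x := by
    intro b hb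
    rw [Bgad, Set.mem_iUnion] at hb
    obtain ⟨i, hi⟩ := hb
    rw [Rgad, Set.mem_iUnion]
    refine ⟨i, ?_⟩
    by_cases hyy : y i = 0
    · rw [if_pos hyy] at hi
      by_cases hxx : x i = 0
      · rw [if_pos hxx]
        simp only [Set.mem_insert_iff, Set.mem_singleton_iff] at hi ⊢; tauto
      · rw [if_neg hxx]
        exact hi
    · rw [if_neg hyy] at hi
      have hxx : x i = 0 := by
        have := horth i
        rcases Nat.mul_eq_zero.mp this with h | h
        · exact h
        · exact absurd h hyy
      rw [if_pos hxx]
      simp only [Set.mem_insert_iff, Set.mem_singleton_iff] at hi ⊢; tauto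
  exact ⟨hsub, id, Set.injOn_id _, fun b hb => hsub hb, fun b _ => rfl⟩
end

section
/- With the setup of the previous gadget (points p(u,v) with coordinates u at i, v at j, 0 elsewhere; p'(u,v) with u at i, v at j, N elsewhere, for (u,v) ∈ E ⊆ {1,…,N}²): if τ ∈ {1,…,N}^d and (τᵢ, τⱼ) ∈ E, then min_{(u,v)∈E} ‖τ - p(u,v)‖₁ + min_{(u,v)∈E} ‖τ - p'(u,v)‖₁ = (d-2)·N. -/
theorem gadget_pair_equality (d : ℕ) (hd : 2 ≤ d) (i j : Fin d) (hij : i < j)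
    (N : ℤ) (hN : 1 ≤ N) (E : Finset (ℤ × ℤ)) (hE : E.Nonempty)
    (hEbox : ∀ uv ∈ E, 1 ≤ uv.1 ∧ uv.1 ≤ N ∧ 1 ≤ uv.2 ∧ uv.2 ≤ N)
    (τ : Fin d → ℤ) (hτ : ∀ ℓ, 1 ≤ τ ℓ ∧ τ ℓ ≤ N)
    (hmem : (τ i, τ j) ∈ E) :
    E.inf' hE (fun uv => ∑ ℓ,
        |(τ ℓ : ℝ) - (if ℓ = i then (uv.1 : ℝ) else if ℓ = j then (uv.2 : ℝ) else 0)|)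
    + E.inf' hE (fun uv => ∑ ℓ,
        |(τ ℓ : ℝ) - (if ℓ = i then (uv.1 : ℝ) else if ℓ = j then (uv.2 : ℝ) else (N : ℝ))|)
    = ((d : ℝ) - 2) * N := by
  have hij' : i ≠ j := ne_of_lt hij
  have hji : j ≠ i := hij'.symm
  set A : ℝ := ∑ ℓ, (if ℓ = i then 0 else if ℓ = j then 0 else |(τ ℓ : ℝ)|) with hA
  set B : ℝ := ∑ ℓ, (if ℓ = i then 0 else if ℓ = j then 0 else |(τ ℓ : ℝ) - N|) with hB
  have h1 : E.inf' hE (fun uv => ∑ ℓ,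
        |(τ ℓ : ℝ) - (if ℓ = i then (uv.1 : ℝ) else if ℓ = j then (uv.2 : ℝ) else 0)|) = A := by
    apply le_antisymm
    · refine le_trans (Finset.inf'_le _ hmem) (le_of_eq ?_)
      rw [hA]
      refine Finset.sum_congr rfl fun ℓ _ => ?_
      by_cases h1 : ℓ = i
      · simp [h1]
      by_cases h2 : ℓ = j <;> simp [h1, h2, hji]
    · refine Finset.le_inf' _ _ fun uv _ => ?_
      rw [hA]
      refine Finset.sum_le_sum fun ℓ _ => ?_
      by_cases h1 : ℓ = i
      · simp [h1, abs_nonneg]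
      by_cases h2 : ℓ = j <;> simp [h1, h2, hji, abs_nonneg]
  have h2 : E.inf' hE (fun uv => ∑ ℓ,
        |(τ ℓ : ℝ) - (if ℓ = i then (uv.1 : ℝ) else if ℓ = j then (uv.2 : ℝ) else (N : ℝ))|) = B := by
    apply le_antisymm
    · refine le_trans (Finset.inf'_le _ hmem) (le_of_eq ?_)
      rw [hB]
      refine Finset.sum_congr rfl fun ℓ _ => ?_
      by_cases h1 : ℓ = i
      · simp [h1]
      by_cases h2 : ℓ = j <;> simp [h1, h2, hji]
    · refine Finset.le_inf' _ _ fun uv _ => ?_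
      rw [hB]
      refine Finset.sum_le_sum fun ℓ _ => ?_
      by_cases h1 : ℓ = i
      · simp [h1, abs_nonneg]
      by_cases h2 : ℓ = j <;> simp [h1, h2, hji, abs_nonneg]
  rw [h1, h2, hA, hB, ← Finset.sum_add_distrib]
  have hterm : ∀ ℓ : Fin d,
      ((if ℓ = i then 0 else if ℓ = j then 0 else |(τ ℓ : ℝ)|)
        + (if ℓ = i then 0 else if ℓ = j then 0 else |(τ ℓ : ℝ) - N|))
      = (N : ℝ) - (if ℓ = i then (N : ℝ) else 0) - (if ℓ = j then (N : ℝ) else 0) := by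
    intro ℓ
    have h1 := (hτ ℓ).1
    have h2 := (hτ ℓ).2
    have ha : |(τ ℓ : ℝ)| = (τ ℓ : ℝ) := abs_of_pos (by exact_mod_cast lt_of_lt_of_le one_pos h1)
    have hb : |(τ ℓ : ℝ) - N| = (N : ℝ) - τ ℓ := by
      rw [abs_sub_comm]; exact abs_of_nonneg (by exact_mod_cast sub_nonneg.mpr h2)
    by_cases hi : ℓ = i
    · simp [hi, hij']
    by_cases hj : ℓ = j <;> simp [hi, hj, hji, ha, hb] <;> ring
  rw [Finset.sum_congr rfl (fun ℓ _ => hterm ℓ)]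
  simp [Finset.sum_sub_distrib, Finset.sum_ite_eq', Finset.card_univ]
  ring
end

section
/- With the same setup: if τ ∈ ℝ^d and the pair of nearest integers (⌊τᵢ⌉, ⌊τⱼ⌉) is not in E ⊆ ℤ², then min_{(u,v)∈E} ‖τ - p(u,v)‖₁ + min_{(u,v)∈E} ‖τ - p'(u,v)‖₁ ≥ (d-2)·N + 1. -/
theorem gadget_pair_nonedge_bound (d : ℕ) (hd : 2 ≤ d) (i j : Fin d) (hij : i < j)
    (N : ℤ) (hN : 1 ≤ N) (E : Finset (ℤ × ℤ)) (hE : E.Nonempty)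
    (τ : Fin d → ℝ) (m₁ m₂ : ℤ)
    (hm₁ : τ i - m₁ ∈ Set.Ioc (-(1/2) : ℝ) (1/2))
    (hm₂ : τ j - m₂ ∈ Set.Ioc (-(1/2) : ℝ) (1/2))
    (hnot : (m₁, m₂) ∉ E) :
    E.inf' hE (fun uv => ∑ ℓ,
        |τ ℓ - (if ℓ = i then (uv.1 : ℝ) else if ℓ = j then (uv.2 : ℝ) else 0)|)
    + E.inf' hE (fun uv => ∑ ℓ,
        |τ ℓ - (if ℓ = i then (uv.1 : ℝ) else if ℓ = j then (uv.2 : ℝ) else (N : ℝ))|)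
    ≥ ((d : ℝ) - 2) * N + 1 := by
  have hijne : i ≠ j := ne_of_lt hij
  have hji : j ∈ (Finset.univ : Finset (Fin d)).erase i :=
    Finset.mem_erase.mpr ⟨hijne.symm, Finset.mem_univ j⟩
  set s : Finset (Fin d) := ((Finset.univ : Finset (Fin d)).erase i).erase j with hs
  have hsplit : ∀ g : Fin d → ℝ, ∑ ℓ, g ℓ = g i + (g j + ∑ ℓ ∈ s, g ℓ) := by
    intro g
    rw [← Finset.add_sum_erase _ g (Finset.mem_univ i),
        ← Finset.add_sum_erase _ g hji]
  have hcard : (s.card : ℝ) = (d : ℝ) - 2 := by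
    have : s.card = d - 2 := by
      simp only [hs, Finset.card_erase_of_mem hji, Finset.card_erase_of_mem (Finset.mem_univ i), Finset.card_univ, Fintype.card_fin]
      omega
    rw [this]
    have : (2 : ℕ) ≤ d := hd
    push_cast [Nat.cast_sub this]
    ring
  -- key half bound
  have key : ∀ uv ∈ E, (1:ℝ)/2 ≤ |τ i - (uv.1 : ℝ)| + |τ j - (uv.2 : ℝ)| := by
    intro uv huv
    have hne : uv ≠ (m₁, m₂) := by rintro rfl; exact hnot huv
    have habs1 : |τ i - (m₁ : ℝ)| ≤ 1/2 :=
      abs_le.mpr ⟨le_of_lt hm₁.1, hm₁.2⟩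
    have habs2 : |τ j - (m₂ : ℝ)| ≤ 1/2 :=
      abs_le.mpr ⟨le_of_lt hm₂.1, hm₂.2⟩
    rcases (by
      by_contra h
      push_neg at h
      exact hne (Prod.ext h.1 h.2) : uv.1 ≠ m₁ ∨ uv.2 ≠ m₂) with h | h
    · have h1 : (1:ℝ) ≤ |(uv.1 : ℝ) - m₁| := by
        have : (1:ℤ) ≤ |uv.1 - m₁| := Int.one_le_abs (sub_ne_zero.mpr h)
        calc (1:ℝ) = ((1:ℤ) : ℝ) := by norm_num
          _ ≤ (|uv.1 - m₁| : ℝ) := by exact_mod_cast this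
          _ = |(uv.1 : ℝ) - m₁| := by push_cast; ring_nf
      have htri : |(uv.1 : ℝ) - m₁| ≤ |τ i - uv.1| + |τ i - m₁| := by
        have := abs_sub_abs_le_abs_sub ((uv.1:ℝ) - m₁) 0
        calc |(uv.1 : ℝ) - m₁| = |(τ i - m₁) - (τ i - uv.1)| := by ring_nf
          _ ≤ |τ i - m₁| + |τ i - uv.1| := abs_sub (τ i - m₁) (τ i - uv.1)
          _ = |τ i - uv.1| + |τ i - m₁| := by ring
      have := abs_nonneg (τ j - (uv.2:ℝ))
      linarith
    · have h1 : (1:ℝ) ≤ |(uv.2 : ℝ) - m₂| := by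
        have : (1:ℤ) ≤ |uv.2 - m₂| := Int.one_le_abs (sub_ne_zero.mpr h)
        calc (1:ℝ) = ((1:ℤ) : ℝ) := by norm_num
          _ ≤ (|uv.2 - m₂| : ℝ) := by exact_mod_cast this
          _ = |(uv.2 : ℝ) - m₂| := by push_cast; ring_nf
      have htri : |(uv.2 : ℝ) - m₂| ≤ |τ j - uv.2| + |τ j - m₂| := by
        calc |(uv.2 : ℝ) - m₂| = |(τ j - m₂) - (τ j - uv.2)| := by ring_nf
          _ ≤ |τ j - m₂| + |τ j - uv.2| := abs_sub (τ j - m₂) (τ j - uv.2)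
          _ = |τ j - uv.2| + |τ j - m₂| := by ring
      have := abs_nonneg (τ i - (uv.1:ℝ))
      linarith
  have hs_mem : ∀ ℓ ∈ s, ℓ ≠ i ∧ ℓ ≠ j := by
    intro ℓ hℓ
    simp only [hs, Finset.mem_erase, Finset.mem_univ] at hℓ
    exact ⟨hℓ.2.1, hℓ.1⟩
  set S₀ : ℝ := ∑ ℓ ∈ s, |τ ℓ| with hS₀
  set SN : ℝ := ∑ ℓ ∈ s, |τ ℓ - (N : ℝ)| with hSN
  have hinf1 : 1/2 + S₀ ≤ E.inf' hE (fun uv => ∑ ℓ,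
      |τ ℓ - (if ℓ = i then (uv.1 : ℝ) else if ℓ = j then (uv.2 : ℝ) else 0)|) := by
    apply Finset.le_inf'
    intro uv huv
    rw [hsplit]
    simp only [if_pos rfl, if_neg hijne.symm, if_neg hijne, if_true]
    have hrest : ∑ ℓ ∈ s, |τ ℓ - (if ℓ = i then (uv.1 : ℝ) else if ℓ = j then (uv.2 : ℝ) else 0)|
        = S₀ := by
      apply Finset.sum_congr rfl
      intro ℓ hℓ
      obtain ⟨h1, h2⟩ := hs_mem ℓ hℓ
      simp [h1, h2]
    rw [hrest]
    have := key uv huv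
    linarith
  have hinf2 : 1/2 + SN ≤ E.inf' hE (fun uv => ∑ ℓ,
      |τ ℓ - (if ℓ = i then (uv.1 : ℝ) else if ℓ = j then (uv.2 : ℝ) else (N:ℝ))|) := by
    apply Finset.le_inf'
    intro uv huv
    rw [hsplit]
    simp only [if_pos rfl, if_neg hijne.symm, if_neg hijne, if_true]
    have hrest : ∑ ℓ ∈ s, |τ ℓ - (if ℓ = i then (uv.1 : ℝ) else if ℓ = j then (uv.2 : ℝ) else (N:ℝ))|
        = SN := by
      apply Finset.sum_congr rfl
      intro ℓ hℓ
      obtain ⟨h1, h2⟩ := hs_mem ℓ hℓ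
      simp [h1, h2]
    rw [hrest]
    have := key uv huv
    linarith
  have hsum : ((d : ℝ) - 2) * N ≤ S₀ + SN := by
    rw [← hcard, hS₀, hSN, ← Finset.sum_add_distrib]
    have : (s.card : ℝ) * N = ∑ _ℓ ∈ s, (N : ℝ) := by
      rw [Finset.sum_const, nsmul_eq_mul]
    rw [this]
    apply Finset.sum_le_sum
    intro ℓ _
    have h1 : (N:ℝ) ≤ |(N:ℝ)| := le_abs_self _
    have h2 : |(N:ℝ)| = |τ ℓ - (τ ℓ - N)| := by ring_nf
    have h3 : |τ ℓ - (τ ℓ - N)| ≤ |τ ℓ| + |τ ℓ - N| := abs_sub (τ ℓ) (τ ℓ - N)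
    linarith
  linarith
end

section
/- Let G be a bipartite graph on vertex set B ⊎ R that is the symmetric difference of two perfect matchings φ, φ' (viewed as edge sets) between a finite set B and a finite set R with |B| ≤ |R|. Then every vertex of G has degree at most 2, every vertex of B has degree 0 or 2, and every connected component of G containing an edge is a path or a cycle; moreover if both φ and φ' are non-crossing (monotone) matchings of points on a line, every such component is a path whose endpoints both lie in R. -/
/-- The symmetric difference graph of two matchings `φ, φ'` from `B` into `ℝ`,
on the vertex set `ℝ ⊕ ℝ` (left copy for blue points, right copy for red points). -/
def matchGraph (B : Finset ℝ) (φ φ' : ℝ → ℝ) : SimpleGraph (ℝ ⊕ ℝ) :=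
  SimpleGraph.fromRel (fun v w =>
    ∃ b ∈ B, φ b ≠ φ' b ∧ v = Sum.inl b ∧
      (w = Sum.inr (φ b) ∨ w = Sum.inr (φ' b)))

open SimpleGraph

lemma matchGraph_adj_inl {B : Finset ℝ} {φ φ' : ℝ → ℝ} {x : ℝ} {w : ℝ ⊕ ℝ} :
    (matchGraph B φ φ').Adj (Sum.inl x) w ↔
      x ∈ B ∧ φ x ≠ φ' x ∧ (w = Sum.inr (φ x) ∨ w = Sum.inr (φ' x)) := by
  rw [matchGraph, fromRel_adj]
  constructor
  · rintro ⟨hne, ⟨b, hb, hbne, heq, hw⟩ | ⟨b, hb, hbne, heq, hw⟩⟩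
    · obtain rfl : b = x := by injection heq.symm
      exact ⟨hb, hbne, hw⟩
    · rcases hw with hw | hw <;> simp at hw
  · rintro ⟨hx, hne, hw⟩
    refine ⟨?_, Or.inl ⟨x, hx, hne, rfl, hw⟩⟩
    rcases hw with rfl | rfl <;> simp

lemma matchGraph_adj_inr {B : Finset ℝ} {φ φ' : ℝ → ℝ} {r : ℝ} {w : ℝ ⊕ ℝ} :
    (matchGraph B φ φ').Adj (Sum.inr r) w ↔
      ∃ b, b ∈ B ∧ φ b ≠ φ' b ∧ w = Sum.inl b ∧ (φ b = r ∨ φ' b = r) := by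
  rw [matchGraph, fromRel_adj]
  constructor
  · rintro ⟨hne, ⟨b, hb, hbne, heq, hw⟩ | ⟨b, hb, hbne, heq, hw⟩⟩
    · simp at heq
    · subst heq
      refine ⟨b, hb, hbne, rfl, ?_⟩
      rcases hw with hw | hw
      · exact Or.inl (Sum.inr.inj hw).symm
      · exact Or.inr (Sum.inr.inj hw).symm
  · rintro ⟨b, hb, hbne, rfl, hor⟩
    refine ⟨by simp, Or.inr ⟨b, hb, hbne, rfl, ?_⟩⟩
    rcases hor with h | h
    · exact Or.inl (by rw [h])
    · exact Or.inr (by rw [h])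

/-- In a cycle, the start vertex has two distinct neighbors within the cycle subgraph. -/
lemma cycle_start_two_adj {V : Type*} {G : SimpleGraph V} {u : V} (c : G.Walk u u)
    (hc : c.IsCycle) :
    ∃ w₁ w₂, w₁ ≠ w₂ ∧ c.toSubgraph.Adj u w₁ ∧ c.toSubgraph.Adj u w₂ := by
  cases c with
  | nil => exact absurd hc (by simp)
  | @cons _ x _ hadj p =>
    rw [Walk.cons_isCycle_iff] at hc
    obtain ⟨hp, he⟩ := hc
    have hxu : x ≠ u := by
      intro h; subst h; exact G.irrefl hadj
    have hnil : ¬ p.reverse.Nil := Walk.not_nil_of_ne (Ne.symm hxu)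
    have hlen : 0 < p.reverse.length := by
      rwa [Walk.nil_iff_length_eq, ← Ne, ← Nat.pos_iff_ne_zero] at hnil
    have h2 : p.reverse.toSubgraph.Adj u (p.reverse.getVert 1) := by
      have := p.reverse.toSubgraph_adj_getVert hlen
      simpa [Walk.getVert_zero] using this
    rw [Walk.toSubgraph_reverse] at h2
    refine ⟨x, p.reverse.getVert 1, ?_, ?_, ?_⟩
    · intro h
      apply he
      have h3 : s(u, p.reverse.getVert 1) ∈ p.toSubgraph.edgeSet := h2
      rw [Walk.mem_edges_toSubgraph, ← h] at h3
      exact h3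
    · simp [Walk.toSubgraph, hadj]
    · simp only [Walk.toSubgraph, Subgraph.sup_adj]
      exact Or.inr h2

lemma cycle_two_adj {V : Type*} {G : SimpleGraph V} {v u : V} (c : G.Walk v v)
    (hc : c.IsCycle) (hu : u ∈ c.support) :
    ∃ w₁ w₂, w₁ ≠ w₂ ∧ c.toSubgraph.Adj u w₁ ∧ c.toSubgraph.Adj u w₂ := by
  classical
  obtain ⟨w₁, w₂, hne, h1, h2⟩ := cycle_start_two_adj (c.rotate u hu) (hc.rotate hu)
  rw [c.toSubgraph_rotate hu] at h1 h2
  exact ⟨w₁, w₂, hne, h1, h2⟩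

theorem symmetric_difference_structure (B R : Finset ℝ) (h : B.card ≤ R.card)
    (φ φ' : ℝ → ℝ) (hφR : ∀ b ∈ B, φ b ∈ R) (hφ'R : ∀ b ∈ B, φ' b ∈ R)
    (hφ : Set.InjOn φ B) (hφ' : Set.InjOn φ' B) :
    (∀ v, ((matchGraph B φ φ').neighborSet v).ncard ≤ 2) ∧
    (∀ b ∈ B, ((matchGraph B φ φ').neighborSet (Sum.inl b)).ncard = 0 ∨
              ((matchGraph B φ φ').neighborSet (Sum.inl b)).ncard = 2) ∧
    ((∀ b ∈ B, ∀ b' ∈ B, b' < b → φ b' < φ b) →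
     (∀ b ∈ B, ∀ b' ∈ B, b' < b → φ' b' < φ' b) →
     (matchGraph B φ φ').IsAcyclic ∧
     (∀ v, ((matchGraph B φ φ').neighborSet v).ncard = 1 →
        ∃ r ∈ R, v = Sum.inr r)) := by
  classical
  refine ⟨?_, ?_, ?_⟩
  · -- degree at most 2
    intro v
    cases v with
    | inl x =>
      have hsub : (matchGraph B φ φ').neighborSet (Sum.inl x) ⊆
          {Sum.inr (φ x), Sum.inr (φ' x)} := by
        intro w hw
        rw [mem_neighborSet, matchGraph_adj_inl] at hw
        exact hw.2.2
      calc ((matchGraph B φ φ').neighborSet (Sum.inl x)).ncard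
          ≤ ({Sum.inr (φ x), Sum.inr (φ' x)} : Set (ℝ ⊕ ℝ)).ncard :=
            Set.ncard_le_ncard hsub (Set.toFinite _)
        _ ≤ 2 := le_trans (Set.ncard_insert_le _ _) (by simp)
    | inr r =>
      set A1 : Set (ℝ ⊕ ℝ) := {w | ∃ b, b ∈ B ∧ φ b = r ∧ w = Sum.inl b} with hA1
      set A2 : Set (ℝ ⊕ ℝ) := {w | ∃ b, b ∈ B ∧ φ' b = r ∧ w = Sum.inl b} with hA2
      have hs1 : A1.Subsingleton := by
        rintro w1 ⟨b1, hb1, hr1, rfl⟩ w2 ⟨b2, hb2, hr2, rfl⟩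
        rw [hφ hb1 hb2 (hr1.trans hr2.symm)]
      have hs2 : A2.Subsingleton := by
        rintro w1 ⟨b1, hb1, hr1, rfl⟩ w2 ⟨b2, hb2, hr2, rfl⟩
        rw [hφ' hb1 hb2 (hr1.trans hr2.symm)]
      have hsub : (matchGraph B φ φ').neighborSet (Sum.inr r) ⊆ A1 ∪ A2 := by
        intro w hw
        rw [mem_neighborSet, matchGraph_adj_inr] at hw
        obtain ⟨b, hb, hbne, rfl, hor⟩ := hw
        rcases hor with h | h
        · exact Or.inl ⟨b, hb, h, rfl⟩
        · exact Or.inr ⟨b, hb, h, rfl⟩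
      have hn1 : A1.ncard ≤ 1 := by
        rcases hs1.eq_empty_or_singleton with h | ⟨a, h⟩ <;> simp [h]
      have hn2 : A2.ncard ≤ 1 := by
        rcases hs2.eq_empty_or_singleton with h | ⟨a, h⟩ <;> simp [h]
      calc ((matchGraph B φ φ').neighborSet (Sum.inr r)).ncard
          ≤ (A1 ∪ A2).ncard := Set.ncard_le_ncard hsub
            ((hs1.finite.union hs2.finite))
        _ ≤ A1.ncard + A2.ncard := Set.ncard_union_le _ _
        _ ≤ 2 := by omega
  · -- blue vertices have degree 0 or 2
    intro b hb
    by_cases hne : φ b = φ' b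
    · left
      have : (matchGraph B φ φ').neighborSet (Sum.inl b) = ∅ := by
        ext w
        simp [mem_neighborSet, matchGraph_adj_inl, hne]
      simp [this]
    · right
      have : (matchGraph B φ φ').neighborSet (Sum.inl b)
          = {Sum.inr (φ b), Sum.inr (φ' b)} := by
        ext w
        simp [mem_neighborSet, matchGraph_adj_inl, hb, hne]
      rw [this]
      exact Set.ncard_pair (by simpa using hne)
  · intro hm hm'
    constructor
    · -- acyclicity
      intro v c hc
      have hverts : ∀ {a b : ℝ ⊕ ℝ}, c.toSubgraph.Adj a b → b ∈ c.support := by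
        intro a b hab
        exact (c.mem_verts_toSubgraph).mp hab.snd_mem
      -- there is a blue vertex on the cycle
      have hblue : ∃ b, b ∈ B ∧ Sum.inl b ∈ c.support := by
        obtain ⟨w₁, w₂, hne, h1, _⟩ := cycle_two_adj c hc c.start_mem_support
        have hadj : (matchGraph B φ φ').Adj v w₁ := h1.adj_sub
        cases v with
        | inl x =>
          rw [matchGraph_adj_inl] at hadj
          exact ⟨x, hadj.1, c.start_mem_support⟩
        | inr r =>
          rw [matchGraph_adj_inr] at hadj
          obtain ⟨b, hbB, _, rfl, _⟩ := hadj
          exact ⟨b, hbB, hverts h1⟩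
      haveI : DecidablePred (fun b : ℝ => Sum.inl b ∈ c.support) :=
        fun _ => Classical.dec _
      set T : Finset ℝ := B.filter (fun b => Sum.inl b ∈ c.support) with hT
      have hTne : T.Nonempty := by
        obtain ⟨b, hb1, hb2⟩ := hblue
        exact ⟨b, by simp [hT, hb1, hb2]⟩
      set bm : ℝ := T.max' hTne with hbm
      have hbmB : bm ∈ B := (Finset.mem_filter.mp (T.max'_mem hTne)).1
      have hbms : Sum.inl bm ∈ c.support := (Finset.mem_filter.mp (T.max'_mem hTne)).2
      have hmax : ∀ b ∈ B, Sum.inl b ∈ c.support → b ≤ bm := by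
        intro b hb1 hb2
        exact T.le_max' b (by simp [hT, hb1, hb2])
      -- key step: if inr (f bm) is on the cycle, then f bm < g bm
      have key : ∀ (f g : ℝ → ℝ), Set.InjOn f B → Set.InjOn g B →
          (∀ b ∈ B, ∀ b' ∈ B, b' < b → g b' < g b) →
          (∀ w, (matchGraph B φ φ').Adj (Sum.inr (f bm)) w →
            ∃ b, b ∈ B ∧ f b ≠ g b ∧ w = Sum.inl b ∧ (f b = f bm ∨ g b = f bm)) →
          Sum.inr (f bm) ∈ c.support → f bm < g bm := by
        intro f g hf hg hgm hadj hrs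
        obtain ⟨w₁, w₂, hw12, h1, h2⟩ := cycle_two_adj c hc hrs
        obtain ⟨b₁, hb₁B, hfg₁, rfl, hor₁⟩ := hadj w₁ h1.adj_sub
        obtain ⟨b₂, hb₂B, hfg₂, rfl, hor₂⟩ := hadj w₂ h2.adj_sub
        have hb12 : b₁ ≠ b₂ := fun h => hw12 (by rw [h])
        have hobt : ∃ b', b' ∈ B ∧ b' ≠ bm ∧ g b' = f bm ∧ Sum.inl b' ∈ c.support := by
          rcases hor₁ with ha1 | ha1 <;> rcases hor₂ with ha2 | ha2
          · exact absurd ((hf hb₁B hbmB ha1).trans (hf hb₂B hbmB ha2).symm) hb12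
          · refine ⟨b₂, hb₂B, ?_, ha2, hverts h2⟩
            intro hbe
            rw [hbe] at ha2
            exact hfg₂ (by rw [hbe]; exact ha2.symm)
          · refine ⟨b₁, hb₁B, ?_, ha1, hverts h1⟩
            intro hbe
            rw [hbe] at ha1
            exact hfg₁ (by rw [hbe]; exact ha1.symm)
          · exact absurd (hg hb₁B hb₂B (ha1.trans ha2.symm)) hb12
        obtain ⟨b', hb'B, hb'ne, hgb', hb's⟩ := hobt
        have hlt : b' < bm := lt_of_le_of_ne (hmax b' hb'B hb's) hb'ne
        have := hgm bm hbmB b' hb'B hlt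
        rwa [hgb'] at this
      -- both red neighbors of bm are on the cycle
      obtain ⟨w₁, w₂, hw12, h1, h2⟩ := cycle_two_adj c hc hbms
      have ha1 := matchGraph_adj_inl.mp h1.adj_sub
      have ha2 := matchGraph_adj_inl.mp h2.adj_sub
      have hboth : Sum.inr (φ bm) ∈ c.support ∧ Sum.inr (φ' bm) ∈ c.support := by
        rcases ha1.2.2 with hv1 | hv1 <;> rcases ha2.2.2 with hv2 | hv2
        · exact absurd (hv1.trans hv2.symm) hw12
        · exact ⟨hv1 ▸ hverts h1, hv2 ▸ hverts h2⟩
        · exact ⟨hv2 ▸ hverts h2, hv1 ▸ hverts h1⟩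
        · exact absurd (hv1.trans hv2.symm) hw12
      have hlt1 : φ bm < φ' bm := by
        refine key φ φ' hφ hφ' hm' ?_ hboth.1
        intro w hw
        rw [matchGraph_adj_inr] at hw
        exact hw
      have hlt2 : φ' bm < φ bm := by
        refine key φ' φ hφ' hφ hm ?_ hboth.2
        intro w hw
        rw [matchGraph_adj_inr] at hw
        obtain ⟨b, hbB, hbne, rfl, hor⟩ := hw
        exact ⟨b, hbB, hbne.symm, rfl, hor.symm⟩
      exact absurd (hlt1.trans hlt2) (lt_irrefl _)
    · -- degree-1 vertices are red
      intro v hv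
      obtain ⟨a, ha⟩ := Set.ncard_eq_one.mp hv
      have haa : a ∈ (matchGraph B φ φ').neighborSet v := by rw [ha]; rfl
      rw [mem_neighborSet] at haa
      cases v with
      | inl x =>
        exfalso
        have hx := matchGraph_adj_inl.mp haa
        have m1 : Sum.inr (φ x) ∈ (matchGraph B φ φ').neighborSet (Sum.inl x) := by
          rw [mem_neighborSet, matchGraph_adj_inl]
          exact ⟨hx.1, hx.2.1, Or.inl rfl⟩
        have m2 : Sum.inr (φ' x) ∈ (matchGraph B φ φ').neighborSet (Sum.inl x) := by
          rw [mem_neighborSet, matchGraph_adj_inl]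
          exact ⟨hx.1, hx.2.1, Or.inr rfl⟩
        rw [ha, Set.mem_singleton_iff] at m1 m2
        exact hx.2.1 (Sum.inr.inj (m1.trans m2.symm))
      | inr r =>
        have hr := matchGraph_adj_inr.mp haa
        obtain ⟨b, hbB, _, _, hor⟩ := hr
        rcases hor with h' | h'
        · exact ⟨r, h' ▸ hφR b hbB, rfl⟩
        · exact ⟨r, h' ▸ hφ'R b hbB, rfl⟩
end
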